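/- Let c ∈ (5/6, 1] and set u_{2,±} = (−5+10c ± √5·√(5−16c+12c²)) / (8(2c²−c)). Then 5−16c+12c² ≥ 0, 2c²−c > 0, and f(c, u_{2,+}) = u_{2,−} and f(c, u_{2,−}) = u_{2,+}, where f(c,x) = 4x(1−cx)/(1+4(1−c)x); in particular u_{2,+} and u_{2,−} form a periodic orbit of period 2: f(c, f(c, u_{2,±})) = u_{2,±}. -/

import Mathlib

noncomputable def f (c x : ℝ) : ℝ := 4 * x * (1 - c * x) / (1 + 4 * (1 - c) * x)

lemma key (c s : ℝ) (ha : (8 * (2 * c ^ 2 - c)) ≠ 0)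
    (hs2 : s ^ 2 = 60 * c ^ 2 - 80 * c + 25)
    (hD : 8 * (2 * c ^ 2 - c) + 4 * (1 - c) * (-5 + 10 * c + s) ≠ 0) :
    f c ((-5 + 10 * c + s) / (8 * (2 * c ^ 2 - c)))
      = (-5 + 10 * c - s) / (8 * (2 * c ^ 2 - c)) := by
  have hc0 : c ≠ 0 := by rintro rfl; simp at ha
  have hc1 : c * 2 - 1 ≠ 0 := fun h => ha (by linear_combination 8 * c * h)
  have hY : 1 + 4 * (1 - c) * ((-5 + 10 * c + s) / (8 * (2 * c ^ 2 - c))) ≠ 0 := by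
    rw [show (1 : ℝ) + 4 * (1 - c) * ((-5 + 10 * c + s) / (8 * (2 * c ^ 2 - c)))
        = (8 * (2 * c ^ 2 - c) + 4 * (1 - c) * (-5 + 10 * c + s)) / (8 * (2 * c ^ 2 - c)) by
      field_simp]
    exact div_ne_zero hD ha
  unfold f
  rw [div_eq_div_iff hY ha]
  field_simp
  linear_combination (4 - 8 * c) * hs2

theorem period_two_orbit (c : ℝ) (hc : c ∈ Set.Ioc (5/6 : ℝ) 1) :
    0 ≤ 5 - 16 * c + 12 * c ^ 2 ∧ 0 < 2 * c ^ 2 - c ∧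
    f c ((-5 + 10 * c + Real.sqrt 5 * Real.sqrt (5 - 16 * c + 12 * c ^ 2)) /
          (8 * (2 * c ^ 2 - c)))
      = (-5 + 10 * c - Real.sqrt 5 * Real.sqrt (5 - 16 * c + 12 * c ^ 2)) /
          (8 * (2 * c ^ 2 - c)) ∧
    f c ((-5 + 10 * c - Real.sqrt 5 * Real.sqrt (5 - 16 * c + 12 * c ^ 2)) /
          (8 * (2 * c ^ 2 - c)))
      = (-5 + 10 * c + Real.sqrt 5 * Real.sqrt (5 - 16 * c + 12 * c ^ 2)) /
          (8 * (2 * c ^ 2 - c)) ∧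
    f c (f c ((-5 + 10 * c + Real.sqrt 5 * Real.sqrt (5 - 16 * c + 12 * c ^ 2)) /
          (8 * (2 * c ^ 2 - c))))
      = (-5 + 10 * c + Real.sqrt 5 * Real.sqrt (5 - 16 * c + 12 * c ^ 2)) /
          (8 * (2 * c ^ 2 - c)) ∧
    f c (f c ((-5 + 10 * c - Real.sqrt 5 * Real.sqrt (5 - 16 * c + 12 * c ^ 2)) /
          (8 * (2 * c ^ 2 - c))))
      = (-5 + 10 * c - Real.sqrt 5 * Real.sqrt (5 - 16 * c + 12 * c ^ 2)) /
          (8 * (2 * c ^ 2 - c)) := by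
  obtain ⟨hc1, hc2⟩ := hc
  have h1 : (0:ℝ) ≤ 5 - 16 * c + 12 * c ^ 2 := by nlinarith
  have h2 : (0:ℝ) < 2 * c ^ 2 - c := by nlinarith
  set s : ℝ := Real.sqrt 5 * Real.sqrt (5 - 16 * c + 12 * c ^ 2) with hs
  have hs0 : 0 ≤ s := mul_nonneg (Real.sqrt_nonneg _) (Real.sqrt_nonneg _)
  have hs2 : s ^ 2 = 60 * c ^ 2 - 80 * c + 25 := by
    rw [hs, mul_pow, Real.sq_sqrt (by norm_num : (5:ℝ) ≥ 0), Real.sq_sqrt h1]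
    ring
  have ha : (8 * (2 * c ^ 2 - c)) ≠ 0 := by positivity
  have hDp : 0 < 8 * (2 * c ^ 2 - c) + 4 * (1 - c) * (-5 + 10 * c + s) := by nlinarith
  have hprod : (8 * (2 * c ^ 2 - c) + 4 * (1 - c) * (-5 + 10 * c - s)) *
      (8 * (2 * c ^ 2 - c) + 4 * (1 - c) * (-5 + 10 * c + s))
      = 64 * c ^ 2 * (2 * c - 1) * (4 - 3 * c) := by
    linear_combination (-16 * (1 - c) ^ 2) * hs2
  have hDm : 0 < 8 * (2 * c ^ 2 - c) + 4 * (1 - c) * (-5 + 10 * c - s) := by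
    nlinarith [hprod, hDp]
  have hfp := key c s ha hs2 hDp.ne'
  have hfm := key c (-s) ha (by rw [neg_pow]; simpa using hs2)
    (by rw [show (-5 + 10 * c + -s) = -5 + 10 * c - s by ring]; exact hDm.ne')
  rw [show (-5 + 10 * c + -s) = -5 + 10 * c - s by ring,
      show (-5 + 10 * c - -s) = -5 + 10 * c + s by ring] at hfm
  exact ⟨h1, h2, hfp, hfm, by rw [hfp, hfm], by rw [hfm, hfp]⟩
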